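/- Let M : Matrix (Fin n) (Fin m) ℝ be a zero-sum game and let (x, y) be a Nash equilibrium of M. Let K = {p : Fin n × Fin m | x p.1 > 0 ∧ y p.2 > 0} be the support subgame of the equilibrium. Then the subgraph of the preference (response) graph induced on K is strongly connected: for all p, q ∈ K, q is reachable from p under the reflexive-transitive closure of the restricted arc relation r' p' q' := (arc p'→q') ∧ p' ∈ K ∧ q' ∈ K. -/

import Mathlib

open Matrix

private lemma aux_le {k : ℕ} (w g : Fin k → ℝ) (P : Fin k → Prop) [DecidablePred P]
    (hw : ∀ t, 0 ≤ w t) (hwsum : ∑ t, w t = 1)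
    (hcomp : ∀ t₁ t₂, P t₁ → 0 < w t₂ → ¬P t₂ → g t₁ < g t₂)
    (v : ℝ) (hg : ∑ t, g t * w t = v) :
    (∑ t, if P t then g t * w t else 0) ≤ v * ∑ t, if P t then w t else 0 := by
  classical
  set A := ∑ t, if P t then g t * w t else 0 with hA
  set B := ∑ t, if P t then w t else 0 with hB
  by_cases hne : ∃ t, P t
  · obtain ⟨t₀, ht₀⟩ := hne
    obtain ⟨ta, hta, hmax⟩ := Finset.exists_max_image (Finset.univ.filter P) g
      ⟨t₀, by simp [ht₀]⟩
    have hPta : P ta := (Finset.mem_filter.1 hta).2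
    set a := g ta with ha
    have haB : A ≤ a * B := by
      rw [hA, hB, Finset.mul_sum]
      apply Finset.sum_le_sum
      intro t _
      by_cases h : P t
      · simp only [h, if_true]
        exact mul_le_mul_of_nonneg_right (hmax t (by simp [h])) (hw t)
      · simp [h]
    have hB0 : 0 ≤ B := Finset.sum_nonneg (by intro t _; split <;> simp [hw t])
    have hB1 : B ≤ 1 := by
      rw [hB, ← hwsum]
      apply Finset.sum_le_sum
      intro t _
      split <;> simp [hw t]
    have hup : A + a * (1 - B) ≤ v := by
      have key : ∑ t, (if P t then g t * w t else a * w t) ≤ ∑ t, g t * w t := by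
        apply Finset.sum_le_sum
        intro t _
        by_cases h : P t
        · simp [h]
        · simp only [h, if_false]
          rcases eq_or_lt_of_le (hw t) with h0 | h0
          · rw [← h0]; simp
          · exact mul_le_mul_of_nonneg_right (le_of_lt (hcomp ta t hPta h0 h)) (le_of_lt h0)
      have hid : ∑ t, (if P t then g t * w t else a * w t) = A + a * (1 - B) := by
        have e : ∀ t ∈ Finset.univ, (if P t then g t * w t else a * w t)
            = (if P t then g t * w t else 0) + a * (w t - if P t then w t else 0) := by
          intro t _; split <;> ring
        rw [Finset.sum_congr rfl e, Finset.sum_add_distrib, ← Finset.mul_sum,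
          Finset.sum_sub_distrib, hwsum]
      rw [hid] at key; linarith [hg ▸ key]
    nlinarith [haB, hup, hB0, hB1]
  · push_neg at hne
    have h1 : A = 0 := Finset.sum_eq_zero (by intro t _; simp [hne t])
    have h2 : B = 0 := Finset.sum_eq_zero (by intro t _; simp [hne t])
    rw [h1, h2]; simp

private lemma aux_lt {k : ℕ} (w g : Fin k → ℝ) (P : Fin k → Prop) [DecidablePred P]
    (hw : ∀ t, 0 ≤ w t) (hwsum : ∑ t, w t = 1)
    (hPw : ∀ t, P t → 0 < w t)
    (hcomp : ∀ t₁ t₂, P t₁ → 0 < w t₂ → ¬P t₂ → g t₁ < g t₂)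
    (v : ℝ) (hg : ∑ t, g t * w t = v)
    (t₁ : Fin k) (ht₁ : P t₁) (t₂ : Fin k) (hw₂ : 0 < w t₂) (hn₂ : ¬ P t₂) :
    (∑ t, if P t then g t * w t else 0) < v * ∑ t, if P t then w t else 0 := by
  classical
  set A := ∑ t, if P t then g t * w t else 0 with hA
  set B := ∑ t, if P t then w t else 0 with hB
  obtain ⟨ta, hta, hmax⟩ := Finset.exists_max_image (Finset.univ.filter P) g
    ⟨t₁, by simp [ht₁]⟩
  have hPta : P ta := (Finset.mem_filter.1 hta).2
  set a := g ta with ha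
  have haB : A ≤ a * B := by
    rw [hA, hB, Finset.mul_sum]
    apply Finset.sum_le_sum
    intro t _
    by_cases h : P t
    · simp only [h, if_true]
      exact mul_le_mul_of_nonneg_right (hmax t (by simp [h])) (hw t)
    · simp [h]
  have hB0 : 0 < B := by
    have : w t₁ ≤ B := by
      rw [hB]
      have := Finset.single_le_sum (f := fun t => if P t then w t else 0)
        (fun t _ => by split <;> simp [hw t]) (Finset.mem_univ t₁)
      simpa [ht₁] using this
    linarith [hPw t₁ ht₁]
  have hB1 : B ≤ 1 := by
    rw [hB, ← hwsum]
    apply Finset.sum_le_sum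
    intro t _
    split <;> simp [hw t]
  have hup : A + a * (1 - B) < v := by
    have key : ∑ t, (if P t then g t * w t else a * w t) < ∑ t, g t * w t := by
      apply Finset.sum_lt_sum
      · intro t _
        by_cases h : P t
        · simp [h]
        · simp only [h, if_false]
          rcases eq_or_lt_of_le (hw t) with h0 | h0
          · rw [← h0]; simp
          · exact mul_le_mul_of_nonneg_right (le_of_lt (hcomp ta t hPta h0 h)) (le_of_lt h0)
      · refine ⟨t₂, Finset.mem_univ t₂, ?_⟩
        simp only [hn₂, if_false]
        exact mul_lt_mul_of_pos_right (hcomp ta t₂ hPta hw₂ hn₂) hw₂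
    have hid : ∑ t, (if P t then g t * w t else a * w t) = A + a * (1 - B) := by
      have e : ∀ t ∈ Finset.univ, (if P t then g t * w t else a * w t)
          = (if P t then g t * w t else 0) + a * (w t - if P t then w t else 0) := by
        intro t _; split <;> ring
      rw [Finset.sum_congr rfl e, Finset.sum_add_distrib, ← Finset.mul_sum,
        Finset.sum_sub_distrib, hwsum]
    rw [hid] at key; linarith [hg ▸ key]
  nlinarith [haB, hup, hB0, hB1]

/-- The arc relation of the preference (response) graph of a zero-sum game `M`. -/
def PrefArc {n m : ℕ} (M : Matrix (Fin n) (Fin m) ℝ)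
    (p q : Fin n × Fin m) : Prop :=
  p ≠ q ∧ ((p.2 = q.2 ∧ M p.1 p.2 ≤ M q.1 q.2) ∨ (p.1 = q.1 ∧ M p.1 q.2 ≤ M p.1 p.2))

/-- In a zero-sum game, the subgraph of the preference graph induced on the
support subgame of a Nash equilibrium is strongly connected. -/
theorem nash_support_strongly_connected {n m : ℕ}
    (M : Matrix (Fin n) (Fin m) ℝ)
    (x : Fin n → ℝ) (y : Fin m → ℝ)
    (hx : ∀ s, 0 ≤ x s) (hxsum : ∑ s, x s = 1)
    (hy : ∀ t, 0 ≤ y t) (hysum : ∑ t, y t = 1)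
    (hnash1 : ∀ s : Fin n, (M.mulVec y) s ≤ x ⬝ᵥ M.mulVec y)
    (hnash2 : ∀ t : Fin m, x ⬝ᵥ M.mulVec y ≤ (Mᵀ.mulVec x) t)
    (K : Set (Fin n × Fin m)) (hK : K = {p : Fin n × Fin m | 0 < x p.1 ∧ 0 < y p.2}) :
    ∀ p ∈ K, ∀ q ∈ K,
      Relation.ReflTransGen (fun p' q' => PrefArc M p' q' ∧ p' ∈ K ∧ q' ∈ K) p q := by
  classical
  subst hK
  intro p hp q hq
  by_contra hqR
  set K : Set (Fin n × Fin m) := {p : Fin n × Fin m | 0 < x p.1 ∧ 0 < y p.2} with hKdef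
  set v := x ⬝ᵥ M.mulVec y with hv
  -- row equalities on the support
  have hrow : ∀ s, 0 < x s → ∑ t, M s t * y t = v := by
    intro s hs
    have h2 : ∑ s', x s' * (v - M.mulVec y s') = 0 := by
      have e : ∑ s', x s' * (v - M.mulVec y s')
          = (∑ s', x s') * v - ∑ s', x s' * M.mulVec y s' := by
        rw [Finset.sum_mul, ← Finset.sum_sub_distrib]
        exact Finset.sum_congr rfl (fun s' _ => by ring)
      rw [e, hxsum, one_mul]
      have : v = ∑ s', x s' * M.mulVec y s' := rfl
      linarith
    have := (Finset.sum_eq_zero_iff_of_nonneg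
      (fun i _ => mul_nonneg (hx i) (sub_nonneg.2 (hnash1 i)))).1 h2 s (Finset.mem_univ s)
    have hz : M.mulVec y s = v := by
      rcases mul_eq_zero.1 this with h | h
      · exact absurd h (ne_of_gt hs)
      · linarith
    simpa [Matrix.mulVec, dotProduct] using hz
  -- column equalities on the support
  have hcolsum : ∑ t, y t * Mᵀ.mulVec x t = v := by
    have e : ∑ t, y t * Mᵀ.mulVec x t = ∑ t, ∑ s, x s * (M s t * y t) := by
      apply Finset.sum_congr rfl
      intro t _
      rw [Matrix.mulVec, dotProduct, Finset.mul_sum]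
      exact Finset.sum_congr rfl (fun s _ => by simp [Matrix.transpose_apply]; ring)
    rw [e, Finset.sum_comm]
    rw [hv, dotProduct]
    apply Finset.sum_congr rfl
    intro s _
    rw [Matrix.mulVec, dotProduct, Finset.mul_sum]
  have hcol : ∀ t, 0 < y t → ∑ s, M s t * x s = v := by
    intro t ht
    have h2 : ∑ t', y t' * (Mᵀ.mulVec x t' - v) = 0 := by
      have e : ∑ t', y t' * (Mᵀ.mulVec x t' - v)
          = ∑ t', y t' * Mᵀ.mulVec x t' - (∑ t', y t') * v := by
        rw [Finset.sum_mul, ← Finset.sum_sub_distrib]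
        exact Finset.sum_congr rfl (fun t' _ => by ring)
      rw [e, hysum, one_mul, hcolsum, sub_self]
    have := (Finset.sum_eq_zero_iff_of_nonneg
      (fun i _ => mul_nonneg (hy i) (sub_nonneg.2 (hnash2 i)))).1 h2 t (Finset.mem_univ t)
    have hz : Mᵀ.mulVec x t = v := by
      rcases mul_eq_zero.1 this with h | h
      · exact absurd h (ne_of_gt ht)
      · linarith
    simpa [Matrix.mulVec, dotProduct, Matrix.transpose_apply] using hz
  -- the reachable set
  set R : Set (Fin n × Fin m) :=
    {b | Relation.ReflTransGen (fun p' q' => PrefArc M p' q' ∧ p' ∈ K ∧ q' ∈ K) p b} with hR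
  have hpR : p ∈ R := Relation.ReflTransGen.refl
  have hqnR : q ∉ R := hqR
  have hRK : ∀ b, b ∈ R → b ∈ K := by
    intro b hb
    induction hb with
    | refl => exact hp
    | tail _ h ih => exact h.2.2
  have hstep : ∀ b ∈ R, ∀ c, PrefArc M b c → c ∈ K → c ∈ R :=
    fun b hb c harc hcK => Relation.ReflTransGen.tail hb ⟨harc, hRK b hb, hcK⟩
  -- comparison facts
  have compRow : ∀ s t t', (s, t) ∈ R → 0 < y t' → (s, t') ∉ R → M s t < M s t' := by
    intro s t t' hst hyt' hnot
    by_contra hle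
    push_neg at hle
    have hne : (s, t) ≠ (s, t') := by
      intro h; exact hnot (h ▸ hst)
    exact hnot (hstep _ hst _ ⟨hne, Or.inr ⟨rfl, hle⟩⟩ ⟨(hRK _ hst).1, hyt'⟩)
  have compCol : ∀ s t s', (s, t) ∈ R → 0 < x s' → (s', t) ∉ R → M s' t < M s t := by
    intro s t s' hst hxs' hnot
    by_contra hle
    push_neg at hle
    have hne : (s, t) ≠ (s', t) := by
      intro h; exact hnot (h ▸ hst)
    exact hnot (hstep _ hst _ ⟨hne, Or.inl ⟨rfl, hle⟩⟩ ⟨hxs', (hRK _ hst).2⟩)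
  -- row/column aggregated quantities
  set A : Fin n → ℝ := fun s => ∑ t, if (s, t) ∈ R then M s t * y t else 0 with hA
  set B : Fin n → ℝ := fun s => ∑ t, if (s, t) ∈ R then y t else 0 with hB
  set C : Fin m → ℝ := fun t => ∑ s, if (s, t) ∈ R then (-(M s t)) * x s else 0 with hC
  set D : Fin m → ℝ := fun t => ∑ s, if (s, t) ∈ R then x s else 0 with hD
  -- nonstrict bounds
  have hRy : ∀ s t, (s, t) ∈ R → 0 < y t := fun s t h => (hRK _ h).2
  have hRx : ∀ s t, (s, t) ∈ R → 0 < x s := fun s t h => (hRK _ h).1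
  have hAB : ∀ s, x s * A s ≤ v * (x s * B s) := by
    intro s
    rcases eq_or_lt_of_le (hx s) with h0 | h0
    · have hA0 : A s = 0 := Finset.sum_eq_zero (by
        intro t _
        have : (s, t) ∉ R := fun h => absurd (hRx s t h) (by rw [← h0]; simp)
        simp [this])
      have hB0 : B s = 0 := Finset.sum_eq_zero (by
        intro t _
        have : (s, t) ∉ R := fun h => absurd (hRx s t h) (by rw [← h0]; simp)
        simp [this])
      rw [hA0, hB0]; simp
    · have := aux_le y (fun t => M s t) (fun t => (s, t) ∈ R) hy hysum
        (fun t₁ t₂ h1 h2 h3 => compRow s t₁ t₂ h1 h2 h3) v (hrow s h0)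
      calc x s * A s ≤ x s * (v * B s) :=
            mul_le_mul_of_nonneg_left this (hx s)
        _ = v * (x s * B s) := by ring
  have hCD : ∀ t, y t * C t ≤ (-v) * (y t * D t) := by
    intro t
    rcases eq_or_lt_of_le (hy t) with h0 | h0
    · have hC0 : C t = 0 := Finset.sum_eq_zero (by
        intro s _
        have : (s, t) ∉ R := fun h => absurd (hRy s t h) (by rw [← h0]; simp)
        simp [this])
      have hD0 : D t = 0 := Finset.sum_eq_zero (by
        intro s _
        have : (s, t) ∉ R := fun h => absurd (hRy s t h) (by rw [← h0]; simp)
        simp [this])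
      rw [hC0, hD0]; simp
    · have hgsum : ∑ s, (-(M s t)) * x s = -v := by
        rw [← hcol t h0, ← Finset.sum_neg_distrib]
        exact Finset.sum_congr rfl (fun s _ => by ring)
      have := aux_le x (fun s => -(M s t)) (fun s => (s, t) ∈ R) hx hxsum
        (fun s₁ s₂ h1 h2 h3 => neg_lt_neg (compCol s₁ t s₂ h1 h2 h3)) (-v) hgsum
      calc y t * C t ≤ y t * ((-v) * D t) :=
            mul_le_mul_of_nonneg_left this (hy t)
        _ = (-v) * (y t * D t) := by ring
  -- Fubini identities
  have hW : ∑ s, x s * A s = ∑ t, y t * (-(C t)) := by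
    have e1 : ∑ s, x s * A s = ∑ s, ∑ t, (if (s, t) ∈ R then x s * (M s t * y t) else 0) := by
      apply Finset.sum_congr rfl
      intro s _
      rw [hA, Finset.mul_sum]
      exact Finset.sum_congr rfl (fun t _ => by split <;> simp)
    have e2 : ∑ t, y t * (-(C t))
        = ∑ t, ∑ s, (if (s, t) ∈ R then x s * (M s t * y t) else 0) := by
      apply Finset.sum_congr rfl
      intro t _
      rw [hC, ← Finset.sum_neg_distrib, Finset.mul_sum]
      apply Finset.sum_congr rfl
      intro s _
      split
      · ring
      · simp
    rw [e1, e2, Finset.sum_comm]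
  have hwid : ∑ s, x s * B s = ∑ t, y t * D t := by
    have e1 : ∑ s, x s * B s = ∑ s, ∑ t, (if (s, t) ∈ R then x s * y t else 0) := by
      apply Finset.sum_congr rfl
      intro s _
      rw [hB, Finset.mul_sum]
      exact Finset.sum_congr rfl (fun t _ => by split <;> simp)
    have e2 : ∑ t, y t * D t = ∑ t, ∑ s, (if (s, t) ∈ R then x s * y t else 0) := by
      apply Finset.sum_congr rfl
      intro t _
      rw [hD, Finset.mul_sum]
      apply Finset.sum_congr rfl
      intro s _
      split
      · ring
      · simp
    rw [e1, e2, Finset.sum_comm]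
  -- global equality forces per-row and per-column equality
  have key1 : ∑ s, x s * A s ≤ v * ∑ s, x s * B s := by
    rw [Finset.mul_sum]
    exact Finset.sum_le_sum (fun s _ => hAB s)
  have key2 : v * ∑ t, y t * D t ≤ ∑ t, y t * (-(C t)) := by
    have : ∑ t, y t * C t ≤ (-v) * ∑ t, y t * D t := by
      rw [Finset.mul_sum]
      exact Finset.sum_le_sum (fun t _ => hCD t)
    have e : ∑ t, y t * (-(C t)) = -∑ t, y t * C t := by
      rw [← Finset.sum_neg_distrib]
      exact Finset.sum_congr rfl (fun t _ => by ring)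
    rw [e]; linarith
  have heq : ∑ s, x s * A s = v * ∑ s, x s * B s := by
    have h2 : v * ∑ s, x s * B s ≤ ∑ s, x s * A s := by
      rw [hW, hwid]; exact key2
    linarith
  have hroweq : ∀ s, v * (x s * B s) - x s * A s = 0 := by
    have hz : ∑ s, (v * (x s * B s) - x s * A s) = 0 := by
      rw [Finset.sum_sub_distrib, ← Finset.mul_sum, heq, sub_self]
    intro s
    exact (Finset.sum_eq_zero_iff_of_nonneg
      (fun i _ => sub_nonneg.2 (hAB i))).1 hz s (Finset.mem_univ s)
  have hcoleq : ∀ t, (-v) * (y t * D t) - y t * C t = 0 := by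
    have hz : ∑ t, ((-v) * (y t * D t) - y t * C t) = 0 := by
      rw [Finset.sum_sub_distrib, ← Finset.mul_sum]
      have e : ∑ t, y t * C t = -∑ s, x s * A s := by
        have e' : ∑ t, y t * (-(C t)) = -∑ t, y t * C t := by
          rw [← Finset.sum_neg_distrib]
          exact Finset.sum_congr rfl (fun t _ => by ring)
        rw [← hW] at e'
        linarith
      rw [e, heq, hwid]; ring
    intro t
    exact (Finset.sum_eq_zero_iff_of_nonneg
      (fun i _ => sub_nonneg.2 (hCD i))).1 hz t (Finset.mem_univ t)
  -- final contradiction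
  have hxq : 0 < x q.1 := hq.1
  have hyq : 0 < y q.2 := hq.2
  by_cases hmix : ∃ t₂, (q.1, t₂) ∈ R
  · obtain ⟨t₂, ht₂⟩ := hmix
    have hstrict : A q.1 < v * B q.1 := by
      have := aux_lt y (fun t => M q.1 t) (fun t => (q.1, t) ∈ R) hy hysum
        (fun t h => hRy q.1 t h)
        (fun a b h1 h2 h3 => compRow q.1 a b h1 h2 h3) v (hrow q.1 hxq)
        t₂ ht₂ q.2 hyq (by exact hqnR)
      exact this
    have := hroweq q.1
    nlinarith [hstrict, hxq]
  · push_neg at hmix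
    have hq1p2 : (q.1, p.2) ∉ R := hmix p.2
    have hstrict : C p.2 < (-v) * D p.2 := by
      have hgsum : ∑ s, (-(M s p.2)) * x s = -v := by
        rw [← hcol p.2 hp.2, ← Finset.sum_neg_distrib]
        exact Finset.sum_congr rfl (fun s _ => by ring)
      have := aux_lt x (fun s => -(M s p.2)) (fun s => (s, p.2) ∈ R) hx hxsum
        (fun s h => hRx s p.2 h)
        (fun a b h1 h2 h3 => neg_lt_neg (compCol a p.2 b h1 h2 h3)) (-v) hgsum
        p.1 (by exact hpR) q.1 hxq hq1p2
      exact this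
    have := hcoleq p.2
    nlinarith [hstrict, hp.2]
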